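/- Let φ : B → B' be an étale ring homomorphism and let J ⊆ B be a nilpotent ideal such that the induced map B/J → B'/JB' is an isomorphism. Then φ is an isomorphism. -/
import Mathlib


universe u

/-- An étale ring map `B → B'` which is an isomorphism modulo a nilpotent ideal `J ⊆ B`
is an isomorphism. -/
theorem bijective_of_etale_of_bijective_mod_nilpotent
    (B B' : Type u) [CommRing B] [CommRing B'] [Algebra B B']
    [Algebra.Etale B B']
    (J : Ideal B) (hJ : ∃ n : ℕ, J ^ n = ⊥)
    (h : Function.Bijective
      (Ideal.quotientMap (J.map (algebraMap B B')) (algebraMap B B') Ideal.le_comap_map)) :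
    Function.Bijective (algebraMap B B') := by
  obtain ⟨n, hn⟩ := hJ
  set J' := J.map (algebraMap B B') with hJ'
  have hJnil : IsNilpotent J := ⟨n, hn⟩
  have hJ'nil : IsNilpotent J' := by
    refine ⟨n, ?_⟩
    rw [hJ', ← Ideal.map_pow, hn, Ideal.map_bot]
    rfl
  -- the ring equiv from h
  set f := Ideal.quotientMap J' (algebraMap B B') (Ideal.le_comap_map) with hf
  let e : (B ⧸ J) ≃+* (B' ⧸ J') := RingEquiv.ofBijective f h
  have he : ∀ b : B, e (Ideal.Quotient.mk J b) = Ideal.Quotient.mk J' (algebraMap B B' b) :=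
    fun b => Ideal.quotientMap_mk (H := Ideal.le_comap_map)
  have hesymm : ∀ b : B, e.symm (Ideal.Quotient.mk J' (algebraMap B B' b))
      = Ideal.Quotient.mk J b := fun b => by
    rw [← he b]; exact e.symm_apply_apply _
  -- the B-algebra hom B' → B ⧸ J
  let q : B' →ₐ[B] B ⧸ J :=
    { toRingHom := (e.symm : B' ⧸ J' →+* B ⧸ J).comp (Ideal.Quotient.mk J')
      commutes' := fun b => hesymm b }
  -- lift it to g : B' →ₐ[B] B using formal smoothness
  let g : B' →ₐ[B] B := Algebra.FormallySmooth.lift J hJnil q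
  have hg : ∀ x : B', Ideal.Quotient.mk J (g x) = q x :=
    Algebra.FormallySmooth.mk_lift J hJnil q
  -- φ ∘ g = id by formal unramifiedness
  have key : (IsScalarTower.toAlgHom B B B').comp g = AlgHom.id B B' := by
    apply Algebra.FormallyUnramified.ext J' hJ'nil
    intro x
    simp only [AlgHom.comp_apply, IsScalarTower.toAlgHom_apply, AlgHom.id_apply]
    have : Ideal.Quotient.mk J' (algebraMap B B' (g x)) = e (Ideal.Quotient.mk J (g x)) :=
      (he (g x)).symm
    rw [this, hg x]
    show e (e.symm (Ideal.Quotient.mk J' x)) = Ideal.Quotient.mk J' x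
    exact e.apply_symm_apply _
  constructor
  · intro a b hab
    have := congrArg g hab
    simpa [g, AlgHom.commutes] using this
  · intro x
    refine ⟨g x, ?_⟩
    have := AlgHom.congr_fun key x
    simpa using this
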